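/- Fix any ε > 0, any d > 2ε, and an integer m ≥ d/(ε(d − 2ε)). Suppose H is a 3-graph with V(H) = V₁ ∪ V₂ ∪ V₃ where (V₁, V₂, V₃) is an (ε,d)-regular triple with |V₁| = |V₃| = m and |V₂| = 2m. Then H contains a loose path P omitting at most 8εm/d + 3 vertices of H. -/

import Mathlib

/-- The number of edges of `H` with exactly one vertex in each of `A`, `B`, `C`
(for disjoint `A`, `B`, `C`). -/
def e3 {α : Type*} [DecidableEq α] (H : Finset (Finset α)) (A B C : Finset α) : ℕ :=
  (H.filter (fun e => ∃ a ∈ A, ∃ b ∈ B, ∃ c ∈ C, e = {a, b, c})).card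

/-- The density of `H` with respect to the triple `(A, B, C)`. -/
noncomputable def dens {α : Type*} [DecidableEq α] (H : Finset (Finset α))
    (A B C : Finset α) : ℝ :=
  (e3 H A B C : ℝ) / ((A.card : ℝ) * (B.card : ℝ) * (C.card : ℝ))

/-- The triple `(V₁, V₂, V₃)` of mutually disjoint vertex sets is `ε`-regular in `H`. -/
def EpsRegular {α : Type*} [DecidableEq α] (ε : ℝ) (H : Finset (Finset α))
    (V₁ V₂ V₃ : Finset α) : Prop :=
  ∀ A₁ ⊆ V₁, ∀ A₂ ⊆ V₂, ∀ A₃ ⊆ V₃,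
    ε * (V₁.card : ℝ) ≤ (A₁.card : ℝ) → ε * (V₂.card : ℝ) ≤ (A₂.card : ℝ) →
    ε * (V₃.card : ℝ) ≤ (A₃.card : ℝ) →
    |dens H A₁ A₂ A₃ - dens H V₁ V₂ V₃| ≤ ε

/-- The triple `(V₁, V₂, V₃)` is `(ε, d)`-regular in `H`. -/
def EpsDRegular {α : Type*} [DecidableEq α] (ε d : ℝ) (H : Finset (Finset α))
    (V₁ V₂ V₃ : Finset α) : Prop :=
  EpsRegular ε H V₁ V₂ V₃ ∧ d ≤ dens H V₁ V₂ V₃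

/-- `v 0, v 1, …, v (2k)` is a loose path in the 3-graph `H`. -/
def IsLoosePath {α : Type*} [DecidableEq α] (H : Finset (Finset α)) (k : ℕ)
    (v : ℕ → α) : Prop :=
  Set.InjOn v (Set.Iio (2 * k + 1)) ∧
  ∀ i : ℕ, i < k → ({v (2 * i), v (2 * i + 1), v (2 * i + 2)} : Finset α) ∈ H

/-- The vertex set of the loose path `v 0, …, v (2k)`. -/
def pathVerts {α : Type*} [DecidableEq α] (k : ℕ) (v : ℕ → α) : Finset α :=
  (Finset.range (2 * k + 1)).image v

section Aux

variable {α : Type*} [DecidableEq α] (H : Finset (Finset α))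

lemma e3_le_add_right (A B C C₁ C₂ : Finset α) (h : C ⊆ C₁ ∪ C₂) :
    e3 H A B C ≤ e3 H A B C₁ + e3 H A B C₂ := by
  refine le_trans (Finset.card_le_card ?_) (Finset.card_union_le _ _)
  intro e he
  simp only [e3, Finset.mem_filter, Finset.mem_union] at he ⊢
  obtain ⟨heH, a, ha, b, hb, c, hc, rfl⟩ := he
  rcases Finset.mem_union.1 (h hc) with h' | h'
  · exact Or.inl ⟨heH, a, ha, b, hb, c, h', rfl⟩
  · exact Or.inr ⟨heH, a, ha, b, hb, c, h', rfl⟩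

lemma e3_le_add_mid (A B C B₁ B₂ : Finset α) (h : B ⊆ B₁ ∪ B₂) :
    e3 H A B C ≤ e3 H A B₁ C + e3 H A B₂ C := by
  refine le_trans (Finset.card_le_card ?_) (Finset.card_union_le _ _)
  intro e he
  simp only [e3, Finset.mem_filter, Finset.mem_union] at he ⊢
  obtain ⟨heH, a, ha, b, hb, c, hc, rfl⟩ := he
  rcases Finset.mem_union.1 (h hb) with h' | h'
  · exact Or.inl ⟨heH, a, ha, b, h', c, hc, rfl⟩
  · exact Or.inr ⟨heH, a, ha, b, h', c, hc, rfl⟩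

lemma e3_le_card (A B C : Finset α) : e3 H A B C ≤ A.card * B.card * C.card := by
  have hsub : (H.filter (fun e => ∃ a ∈ A, ∃ b ∈ B, ∃ c ∈ C, e = {a, b, c})) ⊆
      (A ×ˢ B ×ˢ C).image (fun p => ({p.1, p.2.1, p.2.2} : Finset α)) := by
    intro e he
    simp only [Finset.mem_filter] at he
    obtain ⟨-, a, ha, b, hb, c, hc, rfl⟩ := he
    exact Finset.mem_image.2 ⟨(a, b, c), by simp [Finset.mem_product, ha, hb, hc], rfl⟩
  calc e3 H A B C ≤ _ := Finset.card_le_card hsub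
    _ ≤ (A ×ˢ B ×ˢ C).card := Finset.card_image_le
    _ = A.card * B.card * C.card := by simp [Finset.card_product, mul_assoc]

lemma e3_comm13 (A B C : Finset α) : e3 H A B C = e3 H C B A := by
  unfold e3
  congr 1
  ext e
  simp only [Finset.mem_filter]
  constructor
  · rintro ⟨heH, a, ha, b, hb, c, hc, rfl⟩
    exact ⟨heH, c, hc, b, hb, a, ha, by ext x; simp; tauto⟩
  · rintro ⟨heH, c, hc, b, hb, a, ha, rfl⟩
    exact ⟨heH, a, ha, b, hb, c, hc, by ext x; simp; tauto⟩

lemma dens_comm13 (A B C : Finset α) : dens H A B C = dens H C B A := by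
  unfold dens
  rw [e3_comm13]
  ring

lemma e3_eq_sum_first (A B C : Finset α) (hAB : Disjoint A B) (hAC : Disjoint A C) :
    e3 H A B C = ∑ a ∈ A, e3 H {a} B C := by
  unfold e3
  rw [← Finset.card_biUnion]
  · congr 1
    ext e
    simp only [Finset.mem_biUnion, Finset.mem_filter, Finset.mem_singleton]
    constructor
    · rintro ⟨heH, a, ha, b, hb, c, hc, rfl⟩
      exact ⟨a, ha, heH, a, rfl, b, hb, c, hc, rfl⟩
    · rintro ⟨a, ha, heH, a', rfl, b, hb, c, hc, rfl⟩
      exact ⟨heH, a', ha, b, hb, c, hc, rfl⟩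
  · intro x hx y hy hxy
    simp only [Finset.disjoint_left, Finset.mem_filter, Finset.mem_singleton]
    rintro e ⟨heH, a, rfl, b, hb, c, hc, rfl⟩ ⟨-, a', rfl, b', hb', c', hc', he'⟩
    have hmem : a' ∈ ({a, b, c} : Finset α) := by rw [he']; simp
    simp only [Finset.mem_insert, Finset.mem_singleton] at hmem
    rcases hmem with h | h | h
    · exact hxy (h ▸ rfl)
    · exact (Finset.disjoint_left.1 hAB hy) (h ▸ hb)
    · exact (Finset.disjoint_left.1 hAC hy) (h ▸ hc)

lemma badset {ε d : ℝ} {m : ℕ} (X Y Z : Finset α)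
    (hreg : EpsRegular ε H X Y Z) (hdens : d ≤ dens H X Y Z)
    (hX : X.card = m) (hY : Y.card = 2 * m) (hZ : Z.card = m)
    (hXY : Disjoint X Y) (hXZ : Disjoint X Z)
    (hε : 0 < ε) (hm : 0 < m)
    (U₂ U₃ : Finset α) (hU₂ : U₂ ⊆ Y) (hU₃ : U₃ ⊆ Z)
    (hU₂c : ε * (2 * m) ≤ (U₂.card : ℝ)) (hU₃c : ε * m ≤ (U₃.card : ℝ)) :
    ((X.filter (fun x => ((e3 H {x} U₂ U₃ : ℝ) <
        (d - ε) * (U₂.card : ℝ) * (U₃.card : ℝ)))).card : ℝ) < ε * m := by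
  by_contra hcon
  push_neg at hcon
  set B := X.filter (fun x => ((e3 H {x} U₂ U₃ : ℝ) <
      (d - ε) * (U₂.card : ℝ) * (U₃.card : ℝ))) with hB
  have hεm : (0:ℝ) < ε * m := by positivity
  have hBX : B ⊆ X := Finset.filter_subset _ _
  have hBpos : (0:ℝ) < B.card := lt_of_lt_of_le hεm hcon
  have hBne : B.Nonempty := Finset.card_pos.1 (by exact_mod_cast hBpos)
  have hU₂pos : (0:ℝ) < U₂.card := lt_of_lt_of_le (by positivity) hU₂c
  have hU₃pos : (0:ℝ) < U₃.card := lt_of_lt_of_le hεm hU₃c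
  have hsum : e3 H B U₂ U₃ = ∑ x ∈ B, e3 H {x} U₂ U₃ :=
    e3_eq_sum_first H B U₂ U₃
      (Finset.disjoint_of_subset_left hBX (Finset.disjoint_of_subset_right hU₂ hXY))
      (Finset.disjoint_of_subset_left hBX (Finset.disjoint_of_subset_right hU₃ hXZ))
  have hlt : (e3 H B U₂ U₃ : ℝ) < (d - ε) * B.card * U₂.card * U₃.card := by
    rw [hsum]
    push_cast
    calc (∑ x ∈ B, (e3 H {x} U₂ U₃ : ℝ))
        < ∑ _x ∈ B, (d - ε) * (U₂.card : ℝ) * (U₃.card : ℝ) :=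
          Finset.sum_lt_sum_of_nonempty hBne (fun x hx => (Finset.mem_filter.1 hx).2)
      _ = (d - ε) * B.card * U₂.card * U₃.card := by
          rw [Finset.sum_const, nsmul_eq_mul]; ring
  have hdlt : dens H B U₂ U₃ < d - ε := by
    unfold dens
    rw [div_lt_iff₀ (by positivity)]
    nlinarith
  have hR := hreg B hBX U₂ hU₂ U₃ hU₃ (by rw [hX]; exact hcon)
    (by rw [hY]; push_cast; exact hU₂c) (by rw [hZ]; exact hU₃c)
  have h2 := (abs_le.1 hR).1
  linarith

lemma core_step {ε d : ℝ} {m : ℕ} (X Y Z : Finset α)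
    (hregZ : EpsRegular ε H Z Y X) (hdensZ : d ≤ dens H Z Y X)
    (hX : X.card = m) (hY : Y.card = 2 * m) (hZ : Z.card = m)
    (hZY : Disjoint Z Y) (hZX : Disjoint Z X)
    (hε : 0 < ε) (hm : 0 < m) (hde0 : 0 ≤ d - ε) (hde1 : d - ε ≤ 1)
    (x : α) (U₂ Uo Us : Finset α) (hU₂ : U₂ ⊆ Y) (hUo : Uo ⊆ Z) (hUs : Us ⊆ X)
    (hU₂c : ε * (2 * m) ≤ (U₂.card : ℝ)) (hUsc : ε * m ≤ (Us.card : ℝ))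
    (hUoc : ε * m + 1 ≤ (d - ε) * (Uo.card : ℝ))
    (hou : (Uo.card : ℝ) < (U₂.card : ℝ))
    (hgood : ((d - ε) * ((U₂.card : ℝ) + 1) - 1) * (Uo.card : ℝ) ≤ (e3 H {x} U₂ Uo : ℝ)) :
    ∃ b ∈ U₂, ∃ y ∈ Uo, ({x, b, y} : Finset α) ∈ H ∧
      (d - ε) * (U₂.card : ℝ) * (Us.card : ℝ) ≤ (e3 H {y} U₂ Us : ℝ) := by
  classical
  set Bad := Z.filter (fun y => ((e3 H {y} U₂ Us : ℝ) <
      (d - ε) * (U₂.card : ℝ) * (Us.card : ℝ))) with hBadDef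
  have hBad : (Bad.card : ℝ) < ε * m :=
    badset H Z Y X hregZ hdensZ hZ hY hX hZY hZX hε hm U₂ Us hU₂ hUs hU₂c hUsc
  have hεm : (0:ℝ) < ε * m := by positivity
  have hU₂pos : (0:ℝ) < U₂.card := lt_of_lt_of_le (by positivity) hU₂c
  have h1 : e3 H {x} U₂ Uo ≤ e3 H {x} U₂ (Uo \ Bad) + e3 H {x} U₂ (Uo ∩ Bad) := by
    refine e3_le_add_right H _ _ _ _ _ ?_
    intro u hu
    by_cases h : u ∈ Bad
    · exact Finset.mem_union.2 (Or.inr (Finset.mem_inter.2 ⟨hu, h⟩))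
    · exact Finset.mem_union.2 (Or.inl (Finset.mem_sdiff.2 ⟨hu, h⟩))
  have h2 : (e3 H {x} U₂ (Uo ∩ Bad) : ℝ) ≤ (U₂.card : ℝ) * Bad.card := by
    have := e3_le_card H {x} U₂ (Uo ∩ Bad)
    have hc : (Uo ∩ Bad).card ≤ Bad.card := Finset.card_le_card Finset.inter_subset_right
    have : e3 H {x} U₂ (Uo ∩ Bad) ≤ U₂.card * Bad.card := by
      calc e3 H {x} U₂ (Uo ∩ Bad) ≤ ({x} : Finset α).card * U₂.card * (Uo ∩ Bad).card := this
        _ = U₂.card * (Uo ∩ Bad).card := by rw [Finset.card_singleton]; ring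
        _ ≤ U₂.card * Bad.card := Nat.mul_le_mul_left _ hc
    exact_mod_cast this
  have hdeg : ε * m * (U₂.card : ℝ) + ((U₂.card : ℝ) - Uo.card) ≤ (e3 H {x} U₂ Uo : ℝ) := by
    have huo0 : (0:ℝ) ≤ Uo.card := Nat.cast_nonneg _
    nlinarith [mul_le_mul_of_nonneg_right hUoc (le_of_lt hU₂pos)]
  have hpos : (0:ℝ) < (e3 H {x} U₂ (Uo \ Bad) : ℝ) := by
    have hc := mul_lt_mul_of_pos_left hBad hU₂pos
    have h1' : (e3 H {x} U₂ Uo : ℝ) ≤ (e3 H {x} U₂ (Uo \ Bad) : ℝ) + (e3 H {x} U₂ (Uo ∩ Bad) : ℝ) := by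
      exact_mod_cast h1
    linarith
  have hne : (H.filter (fun e => ∃ a ∈ ({x} : Finset α), ∃ b ∈ U₂, ∃ c ∈ Uo \ Bad,
      e = {a, b, c})).Nonempty := by
    rw [← Finset.card_pos]
    exact_mod_cast hpos
  obtain ⟨e, he⟩ := hne
  simp only [Finset.mem_filter, Finset.mem_singleton] at he
  obtain ⟨heH, a, rfl, b, hb, y, hy, rfl⟩ := he
  obtain ⟨hyUo, hyNB⟩ := Finset.mem_sdiff.1 hy
  refine ⟨b, hb, y, hyUo, heH, ?_⟩
  have hyZ : y ∈ Z := hUo hyUo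
  have : ¬ ((e3 H {y} U₂ Us : ℝ) < (d - ε) * (U₂.card : ℝ) * (Us.card : ℝ)) := by
    intro hcon
    exact hyNB (Finset.mem_filter.2 ⟨hyZ, hcon⟩)
  linarith [not_lt.1 this]

end Aux

/-- The invariant maintained by the greedy path-building procedure. -/
def PathInv {α : Type*} [DecidableEq α] (ε d : ℝ) (H : Finset (Finset α))
    (V₁ V₂ V₃ : Finset α) (m t : ℕ) (v : ℕ → α) : Prop :=
  Set.InjOn v (Set.Iio (2 * t + 1)) ∧
  (∀ i < t, v (2 * i + 1) ∈ V₂) ∧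
  (∀ i ≤ t, v (2 * i) ∈ (if Even i then V₁ else V₃)) ∧
  (∀ i < t, ({v (2 * i), v (2 * i + 1), v (2 * i + 2)} : Finset α) ∈ H) ∧
  (V₁ \ pathVerts t v).card + (t + 2) / 2 = m ∧
  (V₃ \ pathVerts t v).card + (t + 1) / 2 = m ∧
  (V₂ \ pathVerts t v).card + t = 2 * m ∧
  ((d - ε) * (((V₂ \ pathVerts t v).card : ℝ) + 1) - 1) *
      (((if Even t then V₃ else V₁) \ pathVerts t v).card : ℝ) ≤
    (e3 H {v (2 * t)} (V₂ \ pathVerts t v) ((if Even t then V₃ else V₁) \ pathVerts t v) : ℝ)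



lemma inv_extend {α : Type*} [DecidableEq α] {ε d : ℝ} (H : Finset (Finset α))
    (V₁ V₂ V₃ : Finset α) (m t : ℕ) (v : ℕ → α)
    (h12 : Disjoint V₁ V₂) (h13 : Disjoint V₁ V₃) (h23 : Disjoint V₂ V₃)
    (hI : PathInv ε d H V₁ V₂ V₃ m t v)
    (b y : α) (hb : b ∈ V₂ \ pathVerts t v)
    (hy : y ∈ (if Even t then V₃ else V₁) \ pathVerts t v)
    (hedge : ({v (2 * t), b, y} : Finset α) ∈ H)
    (hgood : (d - ε) * (((V₂ \ pathVerts t v).card : ℝ)) *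
        (((if Even t then V₁ else V₃) \ pathVerts t v).card : ℝ) ≤
      (e3 H {y} (V₂ \ pathVerts t v) ((if Even t then V₁ else V₃) \ pathVerts t v) : ℝ)) :
    ∃ v', PathInv ε d H V₁ V₂ V₃ m (t + 1) v' := by
  classical
  obtain ⟨hinj, hm2, hmW, hed, c1, c3, c2, hgd⟩ := hI
  set P := pathVerts t v with hPdef
  obtain ⟨hbV, hbP⟩ := Finset.mem_sdiff.1 hb
  obtain ⟨hyW, hyP⟩ := Finset.mem_sdiff.1 hy
  -- y is not in V₂, and b is not in V₁ nor V₃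
  have hyV2 : y ∉ V₂ := by
    by_cases ht : Even t
    · rw [if_pos ht] at hyW
      exact fun h => (Finset.disjoint_left.1 h23 h) hyW
    · rw [if_neg ht] at hyW
      exact fun h => (Finset.disjoint_left.1 h12 hyW) h
  have hbV1 : b ∉ V₁ := fun h => (Finset.disjoint_left.1 h12 h) hbV
  have hbV3 : b ∉ V₃ := fun h => (Finset.disjoint_left.1 h23 hbV) h
  have hby : b ≠ y := fun h => hyV2 (h ▸ hbV)
  set v' : ℕ → α := fun j => if j = 2*t+1 then b else if j = 2*t+2 then y else v j with hv'def
  have hvo : ∀ j, j < 2*t+1 → v' j = v j := by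
    intro j hj
    simp only [hv'def]
    rw [if_neg (by omega), if_neg (by omega)]
  have hv1 : v' (2*t+1) = b := by simp [hv'def]
  have hv2 : v' (2*t+2) = y := by
    simp only [hv'def]
    rw [if_neg (by omega)]
    simp
  have hmemP : ∀ j, j < 2*t+1 → v j ∈ P := by
    intro j hj
    exact Finset.mem_image_of_mem v (Finset.mem_range.2 hj)
  have hP' : pathVerts (t+1) v' = insert b (insert y P) := by
    unfold pathVerts
    ext u
    simp only [Finset.mem_image, Finset.mem_range, Finset.mem_insert]
    constructor
    · rintro ⟨j, hj, rfl⟩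
      rcases (show j < 2*t+1 ∨ j = 2*t+1 ∨ j = 2*t+2 by omega) with h|h|h
      · right; right; rw [hvo j h]; exact hmemP j h
      · left; rw [h, hv1]
      · right; left; rw [h, hv2]
    · rintro (rfl | rfl | hu)
      · exact ⟨2*t+1, by omega, hv1⟩
      · exact ⟨2*t+2, by omega, hv2⟩
      · obtain ⟨j, hj, rfl⟩ := Finset.mem_image.1 hu
        have hj' := Finset.mem_range.1 hj
        exact ⟨j, by omega, hvo j hj'⟩
  -- new difference sets
  have hS2 : V₂ \ pathVerts (t+1) v' = (V₂ \ P).erase b := by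
    rw [hP']
    ext u
    simp only [Finset.mem_sdiff, Finset.mem_insert, Finset.mem_erase, not_or]
    constructor
    · rintro ⟨h1, h2, h3, h4⟩
      exact ⟨h2, h1, h4⟩
    · rintro ⟨h2, h1, h4⟩
      exact ⟨h1, h2, fun he => hyV2 (he ▸ h1), h4⟩
  have hSgen : ∀ S : Finset α, b ∉ S → y ∉ S → S \ pathVerts (t+1) v' = S \ P := by
    intro S hbS hyS
    rw [hP']
    ext u
    simp only [Finset.mem_sdiff, Finset.mem_insert, not_or]
    constructor
    · rintro ⟨h1, _, _, h4⟩
      exact ⟨h1, h4⟩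
    · rintro ⟨h1, h4⟩
      exact ⟨h1, fun he => hbS (he ▸ h1), fun he => hyS (he ▸ h1), h4⟩
  have hSZ : ∀ S : Finset α, b ∉ S → y ∈ S → S \ pathVerts (t+1) v' = (S \ P).erase y := by
    intro S hbS hyS
    rw [hP']
    ext u
    simp only [Finset.mem_sdiff, Finset.mem_insert, Finset.mem_erase, not_or]
    constructor
    · rintro ⟨h1, h2, h3, h4⟩
      exact ⟨h3, h1, h4⟩
    · rintro ⟨h3, h1, h4⟩
      exact ⟨h1, fun he => hbS (he ▸ h1), h3, h4⟩
  refine ⟨v', ?_, ?_, ?_, ?_, ?_, ?_, ?_, ?_⟩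
  · -- injectivity
    intro i hi j hj heq
    simp only [Set.mem_Iio] at hi hj
    rcases (show i < 2*t+1 ∨ i = 2*t+1 ∨ i = 2*t+2 by omega) with hi'|hi'|hi' <;>
      rcases (show j < 2*t+1 ∨ j = 2*t+1 ∨ j = 2*t+2 by omega) with hj'|hj'|hj'
    · exact hinj (Set.mem_Iio.2 hi') (Set.mem_Iio.2 hj')
        (by rwa [hvo i hi', hvo j hj'] at heq)
    · rw [hvo i hi', hj', hv1] at heq
      exact absurd (heq ▸ hmemP i hi') hbP
    · rw [hvo i hi', hj', hv2] at heq
      exact absurd (heq ▸ hmemP i hi') hyP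
    · rw [hi', hv1, hvo j hj'] at heq
      exact absurd (heq ▸ hmemP j hj') hbP
    · omega
    · rw [hi', hv1, hj', hv2] at heq
      exact absurd heq hby
    · rw [hi', hv2, hvo j hj'] at heq
      exact absurd (heq ▸ hmemP j hj') hyP
    · rw [hi', hv2, hj', hv1] at heq
      exact absurd heq.symm hby
    · omega
  · -- middles in V₂
    intro i hi
    by_cases h : i < t
    · rw [hvo (2*i+1) (by omega)]
      exact hm2 i h
    · have h' : i = t := by omega
      rw [h', hv1]
      exact hbV
  · -- even-index vertices alternate
    intro i hi
    by_cases h : i ≤ t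
    · rw [hvo (2*i) (by omega)]
      exact hmW i h
    · have h' : i = t + 1 := by omega
      rw [h']
      have h2 : 2*(t+1) = 2*t+2 := by ring
      rw [h2, hv2]
      rcases Nat.even_or_odd t with ht | ht
      · have : ¬ Even (t+1) := by simp [Nat.even_add_one, ht]
        simp only [if_neg this]
        simpa only [if_pos ht] using hyW
      · have ht' : ¬ Even t := Nat.not_even_iff_odd.2 ht
        have : Even (t+1) := Nat.even_add_one.2 ht'
        simp only [if_pos this]
        simpa only [if_neg ht'] using hyW
  · -- edges
    intro i hi
    by_cases h : i < t
    · rw [hvo (2*i) (by omega), hvo (2*i+1) (by omega), hvo (2*i+2) (by omega)]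
      exact hed i h
    · have h' : i = t := by omega
      rw [h', hvo (2*t) (by omega), hv1]
      have h2 : 2*t+1+1 = 2*t+2 := by ring
      rw [h2, hv2]
      exact hedge
  · -- V₁ count
    rcases Nat.even_or_odd t with ht | ht
    · have hyV1 : y ∉ V₁ := by
        simp only [if_pos ht] at hyW
        exact fun h => (Finset.disjoint_left.1 h13 h) hyW
      rw [hSgen V₁ hbV1 hyV1]
      have htm : t % 2 = 0 := Nat.even_iff.1 ht
      omega
    · have ht' : ¬ Even t := Nat.not_even_iff_odd.2 ht
      have hyV1 : y ∈ V₁ := by simpa only [if_neg ht'] using hyW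
      rw [hSZ V₁ hbV1 hyV1, Finset.card_erase_of_mem (Finset.mem_sdiff.2 ⟨hyV1, hyP⟩)]
      have htm : t % 2 = 1 := Nat.odd_iff.1 ht
      have hc1' : 1 ≤ (V₁ \ P).card := Finset.card_pos.2 ⟨y, Finset.mem_sdiff.2 ⟨hyV1, hyP⟩⟩
      omega
  · -- V₃ count
    rcases Nat.even_or_odd t with ht | ht
    · have hyV3 : y ∈ V₃ := by simpa only [if_pos ht] using hyW
      rw [hSZ V₃ hbV3 hyV3, Finset.card_erase_of_mem (Finset.mem_sdiff.2 ⟨hyV3, hyP⟩)]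
      have htm : t % 2 = 0 := Nat.even_iff.1 ht
      have hc3' : 1 ≤ (V₃ \ P).card := Finset.card_pos.2 ⟨y, Finset.mem_sdiff.2 ⟨hyV3, hyP⟩⟩
      omega
    · have ht' : ¬ Even t := Nat.not_even_iff_odd.2 ht
      have hyV3 : y ∉ V₃ := by
        have hyV1 : y ∈ V₁ := by simpa only [if_neg ht'] using hyW
        exact fun h => (Finset.disjoint_left.1 h13 hyV1) h
      rw [hSgen V₃ hbV3 hyV3]
      have htm : t % 2 = 1 := Nat.odd_iff.1 ht
      omega
  · -- V₂ count
    rw [hS2, Finset.card_erase_of_mem hb]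
    have hc2' : 1 ≤ (V₂ \ P).card := Finset.card_pos.2 ⟨b, hb⟩
    omega
  · -- goodness of the new endpoint
    have hWflip : (if Even (t+1) then V₃ else V₁) = (if Even t then V₁ else V₃) := by
      rcases Nat.even_or_odd t with ht | ht
      · have : ¬ Even (t+1) := by simp [Nat.even_add_one, ht]
        simp [this, ht]
      · have ht' : ¬ Even t := Nat.not_even_iff_odd.2 ht
        have : Even (t+1) := Nat.even_add_one.2 ht'
        simp [this, ht']
    have hWt : (if Even t then V₁ else V₃) \ pathVerts (t+1) v' =
        (if Even t then V₁ else V₃) \ P := by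
      rcases Nat.even_or_odd t with ht | ht
      · have hyV1 : y ∉ V₁ := by
          simp only [if_pos ht] at hyW
          exact fun h => (Finset.disjoint_left.1 h13 h) hyW
        simp only [if_pos ht]
        exact hSgen V₁ hbV1 hyV1
      · have ht' : ¬ Even t := Nat.not_even_iff_odd.2 ht
        have hyV3 : y ∉ V₃ := by
          have hyV1 : y ∈ V₁ := by simpa only [if_neg ht'] using hyW
          exact fun h => (Finset.disjoint_left.1 h13 hyV1) h
        simp only [if_neg ht']
        exact hSgen V₃ hbV3 hyV3
    have h2 : 2*(t+1) = 2*t+2 := by ring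
    rw [hWflip, hWt, hS2, h2, hv2, Finset.card_erase_of_mem hb]
    set U₂ := V₂ \ P with hU₂def
    set Us := (if Even t then V₁ else V₃) \ P with hUsdef
    have hu₂1 : 1 ≤ U₂.card := Finset.card_pos.2 ⟨b, hb⟩
    have hcast : ((U₂.card - 1 : ℕ) : ℝ) = (U₂.card : ℝ) - 1 := by
      push_cast [Nat.cast_sub hu₂1]
      ring
    rw [hcast]
    have hsplit : e3 H {y} U₂ Us ≤ e3 H {y} (U₂.erase b) Us + e3 H {y} {b} Us := by
      refine e3_le_add_mid H _ _ _ _ _ ?_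
      intro u hu
      by_cases h : u = b
      · exact Finset.mem_union.2 (Or.inr (by simp [h]))
      · exact Finset.mem_union.2 (Or.inl (Finset.mem_erase.2 ⟨h, hu⟩))
    have hsb : (e3 H {y} {b} Us : ℝ) ≤ (Us.card : ℝ) := by
      have := e3_le_card H {y} ({b} : Finset α) Us
      simp only [Finset.card_singleton, one_mul] at this
      exact_mod_cast this
    have hsplit' : (e3 H {y} U₂ Us : ℝ) ≤ (e3 H {y} (U₂.erase b) Us : ℝ) + (e3 H {y} {b} Us : ℝ) := by
      exact_mod_cast hsplit
    have : ((d - ε) * ((U₂.card : ℝ) - 1 + 1) - 1) * (Us.card : ℝ) =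
        (d - ε) * (U₂.card : ℝ) * (Us.card : ℝ) - (Us.card : ℝ) := by ring
    rw [this]
    linarith

theorem tst : True := trivial

lemma inv_base {α : Type*} [DecidableEq α] {ε d : ℝ} {m : ℕ} (H : Finset (Finset α))
    (V₁ V₂ V₃ : Finset α)
    (hreg : EpsRegular ε H V₁ V₂ V₃) (hdV : d ≤ dens H V₁ V₂ V₃)
    (hc1 : V₁.card = m) (hc2 : V₂.card = 2 * m) (hc3 : V₃.card = m)
    (h12 : Disjoint V₁ V₂) (h13 : Disjoint V₁ V₃)
    (hε : 0 < ε) (hε1 : ε ≤ 1) (hm : 0 < m) (hde1 : d - ε ≤ 1) (hεm : ε * m < m) :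
    ∃ v, PathInv ε d H V₁ V₂ V₃ m 0 v := by
  classical
  have hmR : (0:ℝ) < m := by exact_mod_cast hm
  have hBad := badset H V₁ V₂ V₃ hreg hdV hc1 hc2 hc3 h12 h13 hε hm V₂ V₃
    (le_refl _) (le_refl _)
    (by rw [hc2]; push_cast; nlinarith) (by rw [hc3]; nlinarith)
  set Bad := V₁.filter (fun x => ((e3 H {x} V₂ V₃ : ℝ) <
      (d - ε) * (V₂.card : ℝ) * (V₃.card : ℝ))) with hBadDef
  have hBadm : Bad.card < m := by
    have : (Bad.card : ℝ) < m := lt_of_lt_of_le (lt_of_lt_of_le hBad hεm.le) (le_refl _)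
    exact_mod_cast this
  have hBX : Bad ⊆ V₁ := Finset.filter_subset _ _
  have hne : (V₁ \ Bad).Nonempty := by
    rw [← Finset.card_pos, Finset.card_sdiff_of_subset hBX, hc1]
    omega
  obtain ⟨x, hx⟩ := hne
  obtain ⟨hxV1, hxB⟩ := Finset.mem_sdiff.1 hx
  have hxV2 : x ∉ V₂ := fun h => (Finset.disjoint_left.1 h12 hxV1) h
  have hxV3 : x ∉ V₃ := fun h => (Finset.disjoint_left.1 h13 hxV1) h
  refine ⟨fun _ => x, ?_, ?_, ?_, ?_, ?_, ?_, ?_, ?_⟩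
  · intro i hi j hj _
    simp only [Set.mem_Iio] at hi hj
    omega
  · intro i hi; omega
  · intro i hi
    have : i = 0 := by omega
    rw [this, if_pos (Even.zero)]
    exact hxV1
  · intro i hi; omega
  · have hP : pathVerts 0 (fun _ => x) = {x} := by
      simp [pathVerts]
    rw [hP, ← Finset.erase_eq, Finset.card_erase_of_mem hxV1, hc1]
    omega
  · have hP : pathVerts 0 (fun _ => x) = {x} := by
      simp [pathVerts]
    have : V₃ \ {x} = V₃ := by
      ext u
      simp only [Finset.mem_sdiff, Finset.mem_singleton]
      exact ⟨fun h => h.1, fun h => ⟨h, fun he => hxV3 (he ▸ h)⟩⟩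
    rw [hP, this, hc3]
    omega
  · have hP : pathVerts 0 (fun _ => x) = {x} := by
      simp [pathVerts]
    have : V₂ \ {x} = V₂ := by
      ext u
      simp only [Finset.mem_sdiff, Finset.mem_singleton]
      exact ⟨fun h => h.1, fun h => ⟨h, fun he => hxV2 (he ▸ h)⟩⟩
    rw [hP, this, hc2]
    omega
  · have hP : pathVerts 0 (fun _ => x) = {x} := by
      simp [pathVerts]
    have e2 : V₂ \ {x} = V₂ := by
      ext u
      simp only [Finset.mem_sdiff, Finset.mem_singleton]
      exact ⟨fun h => h.1, fun h => ⟨h, fun he => hxV2 (he ▸ h)⟩⟩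
    have e3' : V₃ \ {x} = V₃ := by
      ext u
      simp only [Finset.mem_sdiff, Finset.mem_singleton]
      exact ⟨fun h => h.1, fun h => ⟨h, fun he => hxV3 (he ▸ h)⟩⟩
    rw [hP, if_pos (Even.zero), e2, e3']
    have hxg : ¬ ((e3 H {x} V₂ V₃ : ℝ) < (d - ε) * (V₂.card : ℝ) * (V₃.card : ℝ)) := by
      intro hcon
      exact hxB (Finset.mem_filter.2 ⟨hxV1, hcon⟩)
    have hxg' := not_lt.1 hxg
    rw [hc2, hc3] at hxg' ⊢
    push_cast at hxg' ⊢
    nlinarith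

set_option maxHeartbeats 2000000 in
/-- An `(ε,d)`-regular triple with parts of sizes `m, 2m, m` contains a loose path
omitting at most `8εm/d + 3` vertices. -/
theorem stmt_10 (ε d : ℝ) (hε : 0 < ε) (hd : 2 * ε < d) (m : ℕ)
    (hm : d / (ε * (d - 2 * ε)) ≤ (m : ℝ))
    (H : Finset (Finset (Fin (4 * m)))) (hH : ∀ e ∈ H, e.card = 3)
    (V₁ V₂ V₃ : Finset (Fin (4 * m)))
    (h12 : Disjoint V₁ V₂) (h13 : Disjoint V₁ V₃) (h23 : Disjoint V₂ V₃)
    (hcover : V₁ ∪ V₂ ∪ V₃ = Finset.univ)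
    (hc1 : V₁.card = m) (hc2 : V₂.card = 2 * m) (hc3 : V₃.card = m)
    (hreg : EpsDRegular ε d H V₁ V₂ V₃) :
    ∃ (k : ℕ) (v : ℕ → Fin (4 * m)), IsLoosePath H k v ∧
      ((Finset.univ \ pathVerts k v).card : ℝ) ≤ 8 * ε * (m : ℝ) / d + 3 := by
  classical
  obtain ⟨hregV, hdV⟩ := hreg
  have hd0 : 0 < d := by linarith
  have hd2 : 0 < d - 2*ε := by linarith
  have hm0 : 0 < m := by
    rcases Nat.eq_zero_or_pos m with h | h
    · exfalso
      rw [h] at hm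
      have hpos : 0 < d / (ε * (d - 2*ε)) := div_pos hd0 (by positivity)
      simp only [Nat.cast_zero] at hm
      linarith
    · exact h
  have hmR : (0:ℝ) < m := by exact_mod_cast hm0
  have hεmd : d ≤ ε * m * (d - 2*ε) := by
    rw [div_le_iff₀ (by positivity)] at hm
    nlinarith
  have hd1 : d ≤ 1 := by
    have he3 : (e3 H V₁ V₂ V₃ : ℝ) ≤ (V₁.card : ℝ) * V₂.card * V₃.card := by
      exact_mod_cast e3_le_card H V₁ V₂ V₃
    have hpos : (0:ℝ) < (V₁.card : ℝ) * V₂.card * V₃.card := by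
      rw [hc1, hc2, hc3]; push_cast; positivity
    have hle : dens H V₁ V₂ V₃ ≤ 1 := by
      unfold dens
      rw [div_le_one hpos]
      exact he3
    linarith
  have hε1 : ε < 1/2 := by linarith
  have hde : 0 < d - ε := by linarith
  have hde1 : d - ε ≤ 1 := by linarith
  have hεm1 : 1 < ε * m := by nlinarith
  set L : ℕ := ⌈(ε*m+1)/(d-ε)⌉₊ with hLdef
  have hLlb : (ε*m+1)/(d-ε) ≤ (L:ℝ) := Nat.le_ceil _
  have hLub : (L:ℝ) < (ε*m+1)/(d-ε) + 1 :=
    Nat.ceil_lt_add_one (by positivity)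
  have hLd : ε*m+1 ≤ (d-ε) * L := by
    rw [div_le_iff₀ hde] at hLlb
    linarith
  have hLge : ε*m+1 ≤ (L:ℝ) := by
    nlinarith [(Nat.cast_nonneg L : (0:ℝ) ≤ (L:ℝ))]
  have hLm : L ≤ m := by
    have h1 : (ε*m+1)/(d-ε) ≤ (m:ℝ) := by
      rw [div_le_iff₀ hde]
      nlinarith
    have h2 : (L:ℝ) < (m:ℝ) + 1 := by linarith
    have h3 : L < m + 1 := by exact_mod_cast h2
    omega
  have hL1 : 1 ≤ L := by
    have : (1:ℝ) ≤ L := by linarith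
    exact_mod_cast this
  have hregsym : EpsRegular ε H V₃ V₂ V₁ := by
    intro A₃ h3 A₂ h2 A₁ h1 c3' c2' c1'
    have := hregV A₁ h1 A₂ h2 A₃ h3 c1' c2' c3'
    rwa [dens_comm13 H A₃ A₂ A₁, dens_comm13 H V₃ V₂ V₁]
  have hdsym : d ≤ dens H V₃ V₂ V₁ := by rwa [dens_comm13 H V₃ V₂ V₁]
  have h31 : Disjoint V₃ V₁ := h13.symm
  have h32 : Disjoint V₃ V₂ := h23.symm
  have key : ∀ t, t ≤ 2*(m - L) + 1 → ∃ v, PathInv ε d H V₁ V₂ V₃ m t v := by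
    intro t
    induction t with
    | zero =>
      intro _
      exact inv_base H V₁ V₂ V₃ hregV hdV hc1 hc2 hc3 h12 h13 hε (by linarith) hm0 hde1
        (by nlinarith)
    | succ n ih =>
      intro hn
      obtain ⟨v, hI⟩ := ih (by omega)
      have hn' : n ≤ 2*(m - L) := by omega
      have c1 := hI.2.2.2.2.1
      have c3 := hI.2.2.2.2.2.1
      have c2 := hI.2.2.2.2.2.2.1
      have hgd := hI.2.2.2.2.2.2.2
      rcases Nat.even_or_odd n with hpar | hpar
      · -- n even : endpoint in V₁, extend into V₃
        have hnm : n % 2 = 0 := Nat.even_iff.1 hpar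
        have hUoL : L ≤ (V₃ \ pathVerts n v).card := by omega
        have hUsL : L ≤ (V₁ \ pathVerts n v).card + 1 := by omega
        have hu2 : (V₂ \ pathVerts n v).card =
            (V₃ \ pathVerts n v).card + (V₁ \ pathVerts n v).card + 1 := by omega
        have hUoR : (L:ℝ) ≤ ((V₃ \ pathVerts n v).card : ℝ) := by exact_mod_cast hUoL
        have hUsR : (L:ℝ) ≤ ((V₁ \ pathVerts n v).card : ℝ) + 1 := by exact_mod_cast hUsL
        have hU₂R : ((V₂ \ pathVerts n v).card : ℝ) =
            ((V₃ \ pathVerts n v).card : ℝ) + ((V₁ \ pathVerts n v).card : ℝ) + 1 := by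
          exact_mod_cast hu2
        rw [if_pos hpar] at hgd
        obtain ⟨b, hbU, y, hyU, hedge, hgood⟩ := core_step H V₁ V₂ V₃ hregsym hdsym
          hc1 hc2 hc3 h32 h31 hε hm0 (by linarith) hde1 (v (2*n))
          (V₂ \ pathVerts n v) (V₃ \ pathVerts n v) (V₁ \ pathVerts n v)
          Finset.sdiff_subset Finset.sdiff_subset Finset.sdiff_subset
          (by push_cast; linarith) (by linarith)
          (by linarith [mul_le_mul_of_nonneg_left hUoR hde.le]) (by linarith) hgd
        exact inv_extend H V₁ V₂ V₃ m n v h12 h13 h23 hI b y hbU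
          (by rw [if_pos hpar]; exact hyU) hedge
          (by rw [if_pos hpar]; exact hgood)
      · -- n odd : endpoint in V₃, extend into V₁
        have hpar' : ¬ Even n := Nat.not_even_iff_odd.2 hpar
        have hnm : n % 2 = 1 := Nat.odd_iff.1 hpar
        have hUoL : L ≤ (V₁ \ pathVerts n v).card := by omega
        have hUsL : L ≤ (V₃ \ pathVerts n v).card + 1 := by omega
        have hu2 : (V₂ \ pathVerts n v).card =
            (V₁ \ pathVerts n v).card + (V₃ \ pathVerts n v).card + 1 := by omega
        have hUoR : (L:ℝ) ≤ ((V₁ \ pathVerts n v).card : ℝ) := by exact_mod_cast hUoL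
        have hUsR : (L:ℝ) ≤ ((V₃ \ pathVerts n v).card : ℝ) + 1 := by exact_mod_cast hUsL
        have hU₂R : ((V₂ \ pathVerts n v).card : ℝ) =
            ((V₁ \ pathVerts n v).card : ℝ) + ((V₃ \ pathVerts n v).card : ℝ) + 1 := by
          exact_mod_cast hu2
        rw [if_neg hpar'] at hgd
        obtain ⟨b, hbU, y, hyU, hedge, hgood⟩ := core_step H V₃ V₂ V₁ hregV hdV
          hc3 hc2 hc1 h12 h13 hε hm0 (by linarith) hde1 (v (2*n))
          (V₂ \ pathVerts n v) (V₁ \ pathVerts n v) (V₃ \ pathVerts n v)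
          Finset.sdiff_subset Finset.sdiff_subset Finset.sdiff_subset
          (by push_cast; linarith) (by linarith)
          (by linarith [mul_le_mul_of_nonneg_left hUoR hde.le]) (by linarith) hgd
        exact inv_extend H V₁ V₂ V₃ m n v h12 h13 h23 hI b y hbU
          (by rw [if_neg hpar']; exact hyU) hedge
          (by rw [if_neg hpar']; exact hgood)
  obtain ⟨v, hI⟩ := key (2*(m - L) + 1) le_rfl
  refine ⟨2*(m - L) + 1, v, ⟨hI.1, hI.2.2.2.1⟩, ?_⟩
  have hPc : (pathVerts (2*(m - L) + 1) v).card = 2*(2*(m - L) + 1)+1 := by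
    rw [pathVerts, Finset.card_image_of_injOn, Finset.card_range]
    rw [Finset.coe_range]
    exact hI.1
  have hcard : (Finset.univ \ pathVerts (2*(m - L) + 1) v).card
      = 4*m - (2*(2*(m - L) + 1)+1) := by
    rw [Finset.card_sdiff_of_subset (Finset.subset_univ _), hPc, Finset.card_univ, Fintype.card_fin]
  rw [hcard]
  have h1 : 4*m - (2*(2*(m - L) + 1)+1) = 4*L - 3 := by omega
  have h2 : (3:ℕ) ≤ 4*L := by omega
  have hcast : ((4*m - (2*(2*(m - L) + 1)+1) : ℕ) : ℝ) = 4*(L:ℝ) - 3 := by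
    rw [h1, Nat.cast_sub h2]
    push_cast
    ring
  rw [hcast]
  have hfrac : 4*(ε*m+1)/(d-ε) ≤ 8*ε*m/d := by
    rw [div_le_div_iff₀ hde hd0]
    nlinarith
  have h4 : 4*(ε*m+1)/(d-ε) = 4*((ε*m+1)/(d-ε)) := by ring
  have hgoal : 8 * ε * (m : ℝ) / d = 8*ε*m/d := by ring
  rw [hgoal]
  linarith
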